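/- Let k be a field and N ≥ 1. Order ℕ^N (and ℤ^N) by the reversed lexicographic order: a < b if and only if at the largest index where a and b differ, the entry of a is smaller than that of b. Let A be a commutative k-algebra which is free as a k-module with basis (b_m)_{m ∈ ℕ^N}, with b_0 = 1, and assume that for all m, n ∈ ℕ^N the element b_m·b_n − b_{m+n} lies in the k-linear span of { b_p : p < m+n }. For a nonzero x ∈ A let Ψ(x) ∈ ℕ^N be the largest m ∈ ℕ^N whose coefficient in the basis expansion of x is nonzero. Then: (1) A is an integral domain; (2) Ψ(xy) = Ψ(x) + Ψ(y) for all nonzero x, y ∈ A; (3) Ψ(x+y) ≤ max(Ψ(x), Ψ(y)) whenever x, y and x+y are all nonzero. -/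

import Mathlib

/-- The (strict) reversed lexicographic order on `ℕ^N` (and `ℤ^N`): `a < b` iff at the
largest index where `a` and `b` differ, the entry of `a` is smaller than that of `b`. -/
def RevLex {N : ℕ} {R : Type*} [LT R] (a b : Fin N → R) : Prop :=
  ∃ i : Fin N, a i < b i ∧ ∀ j : Fin N, i < j → a j = b j

private lemma RevLex.trans' {N : ℕ} {a b c : Fin N → ℕ} (h1 : RevLex a b) (h2 : RevLex b c) :
    RevLex a c := by
  obtain ⟨i, hi, hia⟩ := h1
  obtain ⟨j, hj, hja⟩ := h2
  rcases lt_trichotomy i j with h | h | h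
  · exact ⟨j, (hia j h).trans_lt hj, fun l hl => (hia l (h.trans hl)).trans (hja l hl)⟩
  · subst h
    exact ⟨i, hi.trans hj, fun l hl => (hia l hl).trans (hja l hl)⟩
  · exact ⟨i, hi.trans_eq (hja i h), fun l hl => (hia l hl).trans (hja l (h.trans hl))⟩

private lemma RevLex.irrefl' {N : ℕ} {a : Fin N → ℕ} (h : RevLex a a) : False := by
  obtain ⟨i, hi, -⟩ := h
  exact lt_irrefl _ hi

private lemma RevLex.addRight {N : ℕ} {a b : Fin N → ℕ} (c : Fin N → ℕ) (h : RevLex a b) :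
    RevLex (a + c) (b + c) := by
  obtain ⟨i, hi, ha⟩ := h
  exact ⟨i, by simpa using add_lt_add_right hi (c i),
    fun j hj => by simp [Pi.add_apply, ha j hj]⟩

private lemma RevLex.addCompat {N : ℕ} {a b p q : Fin N → ℕ} (hp : p = a ∨ RevLex p a)
    (hq : RevLex q b) : RevLex (p + q) (a + b) := by
  have h1 : RevLex (p + q) (p + b) := by
    have := RevLex.addRight p hq
    rwa [add_comm q p, add_comm b p] at this
  rcases hp with rfl | hp
  · exact h1
  · exact h1.trans' (RevLex.addRight b hp)

/-- let `A` be a commutative `k`-algebra, free as a `k`-module with a basis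
`(B m)_{m ∈ ℕ^N}` such that `B 0 = 1` and `B m · B n − B (m+n)` lies in the span of the
basis vectors `B p` with `p <` (reversed lex) `m + n`.  For nonzero `x`, `Ψ x` is the
largest `m` (for the reversed lexicographic order) whose coefficient in `x` is nonzero.
Then `A` is an integral domain, `Ψ` is additive on products of nonzero elements, and
`Ψ (x + y) ≤ max (Ψ x) (Ψ y)`. -/
theorem stmt6 {k : Type*} [Field k] {N : ℕ} (hN : 1 ≤ N)
    {A : Type*} [CommRing A] [Algebra k A]
    (B : Module.Basis (Fin N → ℕ) k A) (hB1 : B 0 = 1)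
    (hmul : ∀ m n : Fin N → ℕ,
      B m * B n - B (m + n) ∈
        Submodule.span k {x : A | ∃ p : Fin N → ℕ, RevLex p (m + n) ∧ x = B p})
    (Ψ : A → (Fin N → ℕ))
    (hΨ : ∀ x : A, x ≠ 0 →
      B.repr x (Ψ x) ≠ 0 ∧ ∀ m : Fin N → ℕ, B.repr x m ≠ 0 → m = Ψ x ∨ RevLex m (Ψ x)) :
    IsDomain A ∧
    (∀ x y : A, x ≠ 0 → y ≠ 0 → Ψ (x * y) = Ψ x + Ψ y) ∧
    (∀ x y : A, x ≠ 0 → y ≠ 0 → x + y ≠ 0 →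
      (Ψ (x + y) = Ψ x ∨ RevLex (Ψ (x + y)) (Ψ x)) ∨
      (Ψ (x + y) = Ψ y ∨ RevLex (Ψ (x + y)) (Ψ y))) := by
  classical
  have hsetEq : ∀ t : Fin N → ℕ,
      {x : A | ∃ p, RevLex p t ∧ x = B p} = ⇑B '' {p | RevLex p t} := by
    intro t
    ext x
    constructor
    · rintro ⟨p, hp, rfl⟩; exact ⟨p, hp, rfl⟩
    · rintro ⟨p, hp, rfl⟩; exact ⟨p, hp, rfl⟩
  have hmono : ∀ {s t : Fin N → ℕ}, RevLex s t →
      Submodule.span k (⇑B '' {p | RevLex p s}) ≤ Submodule.span k (⇑B '' {p | RevLex p t}) := by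
    intro s t h
    exact Submodule.span_mono (Set.image_mono fun p hp => hp.trans' h)
  -- product of a "weakly bounded by a" element and a "strictly bounded by b" element
  have hmulS : ∀ (a b : Fin N → ℕ) (u v : A),
      u ∈ Submodule.span k (⇑B '' {p | p = a ∨ RevLex p a}) →
      v ∈ Submodule.span k (⇑B '' {p | RevLex p b}) →
      u * v ∈ Submodule.span k (⇑B '' {p | RevLex p (a + b)}) := by
    intro a b u v hu hv
    induction hv using Submodule.span_induction with
    | mem v0 hv0 =>
      induction hu using Submodule.span_induction with
      | mem u0 hu0 =>
        obtain ⟨p0, hp0, rfl⟩ := hu0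
        obtain ⟨q0, hq0, rfl⟩ := hv0
        have h1 : RevLex (p0 + q0) (a + b) := RevLex.addCompat hp0 hq0
        have h2 := hmul p0 q0
        rw [hsetEq] at h2
        have h2' : B p0 * B q0 - B (p0 + q0) ∈
            Submodule.span k (⇑B '' {p | RevLex p (a + b)}) := hmono h1 h2
        have h3 : B (p0 + q0) ∈ Submodule.span k (⇑B '' {p | RevLex p (a + b)}) :=
          Submodule.subset_span ⟨p0 + q0, h1, rfl⟩
        simpa using add_mem h2' h3
      | zero => simpa using zero_mem _
      | add x y hx hy ihx ihy => rw [add_mul]; exact add_mem ihx ihy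
      | smul r x hx ih => rw [smul_mul_assoc]; exact Submodule.smul_mem _ _ ih
    | zero => simpa using zero_mem _
    | add x y hx hy ihx ihy => rw [mul_add]; exact add_mem ihx ihy
    | smul r x hx ih => rw [mul_smul_comm]; exact Submodule.smul_mem _ _ ih
  -- leading-term decomposition
  have hlead : ∀ x : A, x ≠ 0 →
      x - (B.repr x (Ψ x)) • B (Ψ x) ∈ Submodule.span k (⇑B '' {p | RevLex p (Ψ x)}) := by
    intro x hx
    rw [Module.Basis.mem_span_image]
    intro q hq
    rw [Finset.mem_coe, Finsupp.mem_support_iff] at hq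
    by_cases h : q = Ψ x
    · subst h
      simp at hq
    · have hne : B.repr x q ≠ 0 := by
        intro h0
        apply hq
        simp [Module.Basis.repr_self, Finsupp.single_apply, h0, Ne.symm h]
      rcases (hΨ x hx).2 q hne with h' | h'
      · exact absurd h' h
      · exact h'
  have hweak : ∀ x : A, x ≠ 0 →
      x ∈ Submodule.span k (⇑B '' {p | p = Ψ x ∨ RevLex p (Ψ x)}) := by
    intro x hx
    rw [Module.Basis.mem_span_image]
    intro q hq
    rw [Finset.mem_coe, Finsupp.mem_support_iff] at hq
    exact (hΨ x hx).2 q hq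
  -- key decomposition of a product
  have key : ∀ x y : A, x ≠ 0 → y ≠ 0 →
      x * y - (B.repr x (Ψ x) * B.repr y (Ψ y)) • B (Ψ x + Ψ y) ∈
        Submodule.span k (⇑B '' {p | RevLex p (Ψ x + Ψ y)}) := by
    intro x y hx hy
    set c := B.repr x (Ψ x) with hc
    set d := B.repr y (Ψ y) with hd
    have e1 : (c • B (Ψ x)) * (y - d • B (Ψ y)) ∈
        Submodule.span k (⇑B '' {p | RevLex p (Ψ x + Ψ y)}) :=
      hmulS (Ψ x) (Ψ y) _ _
        (Submodule.smul_mem _ _ (Submodule.subset_span ⟨Ψ x, Or.inl rfl, rfl⟩))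
        (hlead y hy)
    have e2 : y * (x - c • B (Ψ x)) ∈
        Submodule.span k (⇑B '' {p | RevLex p (Ψ y + Ψ x)}) :=
      hmulS (Ψ y) (Ψ x) _ _ (hweak y hy) (hlead x hx)
    have e2' : (x - c • B (Ψ x)) * y ∈
        Submodule.span k (⇑B '' {p | RevLex p (Ψ x + Ψ y)}) := by
      rw [mul_comm] at e2
      rwa [add_comm (Ψ x) (Ψ y)]
    have e3 : (c * d) • (B (Ψ x) * B (Ψ y) - B (Ψ x + Ψ y)) ∈
        Submodule.span k (⇑B '' {p | RevLex p (Ψ x + Ψ y)}) := by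
      apply Submodule.smul_mem
      have := hmul (Ψ x) (Ψ y)
      rwa [hsetEq] at this
    have hid : x * y - (c * d) • B (Ψ x + Ψ y) =
        (c * d) • (B (Ψ x) * B (Ψ y) - B (Ψ x + Ψ y)) +
          (c • B (Ψ x)) * (y - d • B (Ψ y)) + (x - c • B (Ψ x)) * y := by
      simp only [Algebra.smul_def, map_mul]
      ring
    rw [hid]
    exact add_mem (add_mem e3 e1) e2'
  -- repr of a product at the top index, and bound on its support
  have keyrepr : ∀ x y : A, x ≠ 0 → y ≠ 0 →
      B.repr (x * y) (Ψ x + Ψ y) = B.repr x (Ψ x) * B.repr y (Ψ y) ∧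
      ∀ q, B.repr (x * y) q ≠ 0 → q = Ψ x + Ψ y ∨ RevLex q (Ψ x + Ψ y) := by
    intro x y hx hy
    set c := B.repr x (Ψ x)
    set d := B.repr y (Ψ y)
    set s := Ψ x + Ψ y with hs
    have hw := key x y hx hy
    rw [Module.Basis.mem_span_image] at hw
    have hq : ∀ q, B.repr (x * y) q =
        B.repr (x * y - (c * d) • B s) q + (c * d) * Finsupp.single s (1 : k) q := by
      intro q
      have : B.repr (x * y - (c * d) • B s) q =
          B.repr (x * y) q - (c * d) * Finsupp.single s (1 : k) q := by
        simp only [map_sub, map_smul, Finsupp.sub_apply, Finsupp.smul_apply, Module.Basis.repr_self,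
          Finsupp.single_apply, smul_eq_mul]
      rw [this]; ring
    have hws : B.repr (x * y - (c * d) • B s) s = 0 := by
      by_contra h
      have : s ∈ (B.repr (x * y - (c * d) • B s)).support := Finsupp.mem_support_iff.mpr h
      exact RevLex.irrefl' (hw this)
    constructor
    · rw [hq s, hws, Finsupp.single_eq_same]
      ring
    · intro q hqne
      by_cases h : q = s
      · exact Or.inl h
      · right
        have : B.repr (x * y - (c * d) • B s) q ≠ 0 := by
          intro h0
          apply hqne
          rw [hq q, h0, Finsupp.single_apply, if_neg (Ne.symm h)]
          ring
        exact hw (Finsupp.mem_support_iff.mpr this)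
  have hnz : ∀ x y : A, x ≠ 0 → y ≠ 0 → x * y ≠ 0 := by
    intro x y hx hy h0
    have h1 := (keyrepr x y hx hy).1
    rw [h0] at h1
    simp only [map_zero, Finsupp.coe_zero, Pi.zero_apply] at h1
    exact mul_ne_zero (hΨ x hx).1 (hΨ y hy).1 h1.symm
  haveI : Nontrivial A := ⟨1, 0, by rw [← hB1]; exact B.ne_zero 0⟩
  haveI : NoZeroDivisors A := ⟨fun {a b} hab => by
    by_contra h
    push_neg at h
    exact hnz a b h.1 h.2 hab⟩
  refine ⟨NoZeroDivisors.to_isDomain A, ?_, ?_⟩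
  · intro x y hx hy
    have hxy := hnz x y hx hy
    obtain ⟨h1, h2⟩ := hΨ (x * y) hxy
    have htop : B.repr (x * y) (Ψ x + Ψ y) ≠ 0 := by
      rw [(keyrepr x y hx hy).1]
      exact mul_ne_zero (hΨ x hx).1 (hΨ y hy).1
    rcases h2 _ htop with h | h
    · exact h.symm
    · rcases (keyrepr x y hx hy).2 _ h1 with h' | h'
      · exact h'
      · exact absurd (h'.trans' h) RevLex.irrefl'
  · intro x y hx hy hxy
    obtain ⟨h1, -⟩ := hΨ (x + y) hxy
    have : B.repr x (Ψ (x + y)) ≠ 0 ∨ B.repr y (Ψ (x + y)) ≠ 0 := by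
      by_contra h
      push_neg at h
      apply h1
      rw [map_add, Finsupp.add_apply, h.1, h.2, add_zero]
    rcases this with h | h
    · exact Or.inl ((hΨ x hx).2 _ h)
    · exact Or.inr ((hΨ y hy).2 _ h)
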